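/- Let ξ^1,…,ξ^M and χ be tangent solutions, (H_1,…,H_N) a Lamé solution, and Ω^1,…,Ω^M potentials with Δ_m Ω^a = ξ^a_m·(T_m H_m) for all m, a. Let 𝒲 be the discrete multi-Wroński matrix of ξ^1,…,ξ^M for the partition M = m_1+…+m_N; let 𝕏_i be the (M+1)×(M+1) matrix obtained from 𝒲 by adjoining the column with entry Δ_j^p χ_j in row (j,p) and the bottom row (Δ_i^{m_i}ξ^1_i,…,Δ_i^{m_i}ξ^M_i, Δ_i^{m_i}χ_i); let ℍ_i be 𝒲 with row (i,m_i−1) replaced by (Ω^1,…,Ω^M); and for i ≠ j let 𝒲_{ij} be 𝒲 with row (j,m_j−1) replaced by (Δ_i^{m_i}ξ^1_i,…,Δ_i^{m_i}ξ^M_i). Assume det 𝒲 is nowhere vanishing, and define X_i[M] := det 𝕏_i / det 𝒲, H_i[M] := −det ℍ_i / det 𝒲, and Q_{ij}[M] := −det 𝒲_{ij} / det 𝒲. Then for all i ≠ k: Δ_k X_i[M] = (T_k Q_{ik}[M])·X_k[M] and Δ_k H_i[M] = Q_{ki}[M]·(T_k H_k[M]); that is, the iterated Levy transformation produces a new solution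 of the quadrilateral-lattice linear systems with rotation coefficients Q_{ij}[M]. -/

import Mathlib

noncomputable section

/-- Shift operator `T_j`: `(T_j f)(n) = f(n + e_j)`. -/
def T {N : ℕ} (j : Fin N) (f : (Fin N → ℤ) → ℝ) : (Fin N → ℤ) → ℝ :=
  fun n => f (n + Pi.single j 1)

/-- Difference operator `Δ_j = T_j − 1`. -/
def Δ {N : ℕ} (j : Fin N) (f : (Fin N → ℤ) → ℝ) : (Fin N → ℤ) → ℝ :=
  fun n => f (n + Pi.single j 1) - f n

/-- The discrete multi-Wroński matrix `𝒲(n)` of the `M = m_1 + ⋯ + m_N` tangent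
solutions `ξ^a` (`a` ranges over the canonical `M`-element index set
`Σ j : Fin N, Fin (m j)`): its row `(j, p)` is `(Δ_j^p ξ^a_j(n))_a`. -/
def Wmat {N : ℕ} (m : Fin N → ℕ)
    (ξ : (Σ j : Fin N, Fin (m j)) → Fin N → (Fin N → ℤ) → ℝ) (n : Fin N → ℤ) :
    Matrix (Σ j : Fin N, Fin (m j)) (Σ j : Fin N, Fin (m j)) ℝ :=
  Matrix.of fun r a => (Δ r.1)^[(r.2 : ℕ)] (ξ a r.1) n

/-- The index `(k, m_k − 1)` of the last row of the `k`-th block. -/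
def lastRow {N : ℕ} (m : Fin N → ℕ) (k : Fin N) (h : 0 < m k) :
    Σ j : Fin N, Fin (m j) :=
  ⟨k, ⟨m k - 1, Nat.sub_lt h Nat.one_pos⟩⟩

/-- The bordered matrix `𝕏_i(n)`: the multi-Wroński matrix `𝒲(n)` augmented by the
column `(Δ_j^p χ_j(n))_{(j,p)}` built from the tangent solution `χ` and by the bottom
row `(Δ_i^{m_i} ξ^a_i(n))_a, Δ_i^{m_i} χ_i(n)`. -/
def Xmat {N : ℕ} (m : Fin N → ℕ)
    (ξ : (Σ j : Fin N, Fin (m j)) → Fin N → (Fin N → ℤ) → ℝ)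
    (χ : Fin N → (Fin N → ℤ) → ℝ) (i : Fin N) (n : Fin N → ℤ) :
    Matrix (Option (Σ j : Fin N, Fin (m j))) (Option (Σ j : Fin N, Fin (m j))) ℝ :=
  Matrix.of fun r a =>
    match r, a with
    | some r, some a => (Δ r.1)^[(r.2 : ℕ)] (ξ a r.1) n
    | some r, none => (Δ r.1)^[(r.2 : ℕ)] (χ r.1) n
    | none, some a => (Δ i)^[m i] (ξ a i) n
    | none, none => (Δ i)^[m i] (χ i) n
open Matrix

section Aux

variable {N : ℕ} (Q : Fin N → Fin N → (Fin N → ℤ) → ℝ)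

def TSol (f : Fin N → (Fin N → ℤ) → ℝ) : Prop :=
  ∀ j k, j ≠ k → Δ k (f j) = T k (Q j k) * f k

lemma iter_succ_pt (j : Fin N) (f : (Fin N → ℤ) → ℝ) (p : ℕ) (n : Fin N → ℤ) :
    (Δ j)^[p+1] f n = (Δ j)^[p] f (n + Pi.single j 1) - (Δ j)^[p] f n := by
  rw [Function.iterate_succ_apply']; rfl

lemma iter_pt_shift (j : Fin N) (f : (Fin N → ℤ) → ℝ) (p : ℕ) (n : Fin N → ℤ) :
    (Δ j)^[p] f (n + Pi.single j 1) = (Δ j)^[p] f n + (Δ j)^[p+1] f n := by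
  rw [iter_succ_pt]; ring

lemma Δ_comm (j k : Fin N) (f : (Fin N → ℤ) → ℝ) : Δ j (Δ k f) = Δ k (Δ j f) := by
  funext n
  simp only [Δ]
  rw [add_right_comm n (Pi.single j 1) (Pi.single k 1)]
  ring

lemma Δ_iter_comm (j k : Fin N) (f : (Fin N → ℤ) → ℝ) (p : ℕ) :
    (Δ j)^[p] (Δ k f) = Δ k ((Δ j)^[p] f) := by
  induction p with
  | zero => rfl
  | succ p ih =>
    rw [Function.iterate_succ_apply', Function.iterate_succ_apply', ih, Δ_comm]

lemma sum_step (p : ℕ) (c₁ c₀ v : ℕ → ℝ) :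
    ((∑ s ∈ Finset.range (p+1), c₁ s * (v s + v (s+1)))
      - ∑ s ∈ Finset.range (p+1), c₀ s * v s)
    = ∑ s ∈ Finset.range (p+2),
        ((if s < p + 1 then c₁ s - c₀ s else 0)
          + (if 1 ≤ s then c₁ (s-1) else 0)) * v s := by
  have h1 : ∑ s ∈ Finset.range (p+2), (if s < p + 1 then (c₁ s - c₀ s) * v s else 0)
      = ∑ s ∈ Finset.range (p+1), (c₁ s - c₀ s) * v s := by
    rw [← Finset.sum_subset (Finset.range_subset_range.2 (show p+1 ≤ p+2 by omega))
        (fun x _ hx => if_neg (by simpa using hx))]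
    exact Finset.sum_congr rfl fun x hx => if_pos (Finset.mem_range.1 hx)
  have h2 : ∑ s ∈ Finset.range (p+2), (if 1 ≤ s then c₁ (s-1) * v s else 0)
      = ∑ t ∈ Finset.range (p+1), c₁ t * v (t+1) := by
    rw [Finset.sum_range_succ']
    simp
  simp only [add_mul, ite_mul, zero_mul, Finset.sum_add_distrib]
  rw [h1, h2]
  simp only [sub_mul]
  rw [Finset.sum_sub_distrib]
  simp only [mul_add]
  rw [Finset.sum_add_distrib]
  ring

/-- discrete Leibniz rule, span form -/
lemma leibniz (j : Fin N) (g : (Fin N → ℤ) → ℝ) :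
    ∀ (p : ℕ) (n : Fin N → ℤ), ∃ c : ℕ → ℝ, ∀ h : (Fin N → ℤ) → ℝ,
      (Δ j)^[p] (g * h) n = ∑ s ∈ Finset.range (p+1), c s * (Δ j)^[s] h n := by
  intro p
  induction p with
  | zero =>
    intro n
    exact ⟨fun _ => g n, fun h => by simp [Pi.mul_apply]⟩
  | succ p ih =>
    intro n
    obtain ⟨c₁, hc₁⟩ := ih (n + Pi.single j 1)
    obtain ⟨c₀, hc₀⟩ := ih n
    refine ⟨fun s => (if s < p + 1 then c₁ s - c₀ s else 0)
      + (if 1 ≤ s then c₁ (s-1) else 0), fun h => ?_⟩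
    rw [iter_succ_pt, hc₁ h, hc₀ h, ← sum_step]
    congr 1
    exact Finset.sum_congr rfl fun s _ => by rw [iter_pt_shift]

/-- reduction lemma : `Δ_j^q f_r` in terms of `Δ_j^s f_j`, `s < q`. -/
lemma reduce {j r : Fin N} (hrj : r ≠ j) :
    ∀ (q : ℕ), 1 ≤ q → ∀ (n : Fin N → ℤ), ∃ c : ℕ → ℝ,
      ∀ f, TSol Q f →
        (Δ j)^[q] (f r) n = ∑ s ∈ Finset.range q, c s * (Δ j)^[s] (f j) n := by
  intro q
  induction q with
  | zero => omega
  | succ q ih =>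
    intro _ n
    rcases Nat.eq_or_lt_of_le (Nat.one_le_iff_ne_zero.2 (Nat.succ_ne_zero q)) with h1 | h1
    · -- q = 0
      obtain rfl : q = 0 := by omega
      refine ⟨fun _ => Q r j (n + Pi.single j 1), fun f hf => ?_⟩
      have := congrFun (hf r j hrj) n
      simpa [Δ, T, Pi.mul_apply, Finset.sum_range_one] using this
    · have hq : 1 ≤ q := by omega
      obtain ⟨q', rfl⟩ : ∃ q', q = q' + 1 := ⟨q - 1, by omega⟩
      obtain ⟨c₁, hc₁⟩ := ih hq (n + Pi.single j 1)
      obtain ⟨c₀, hc₀⟩ := ih hq n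
      refine ⟨fun s => (if s < q' + 1 then c₁ s - c₀ s else 0)
        + (if 1 ≤ s then c₁ (s-1) else 0), fun f hf => ?_⟩
      rw [iter_succ_pt, hc₁ f hf, hc₀ f hf, ← sum_step]
      congr 1
      exact Finset.sum_congr rfl fun s _ => by rw [iter_pt_shift]

lemma sum_ite_le {P t : ℕ} (ht : t < P) (G : ℕ → ℝ) :
    ∑ u ∈ Finset.range P, (if u ≤ t then G u else 0) = ∑ u ∈ Finset.range (t+1), G u := by
  rw [← Finset.sum_subset (Finset.range_subset_range.2 (show t+1 ≤ P by omega))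
      (fun x _ hx => if_neg (by simp at hx; omega))]
  exact Finset.sum_congr rfl fun x hx => if_pos (by simp at hx; omega)

/-- master shift lemma (direction `k`, block `j ≠ k`). -/
lemma shiftRow {j k : Fin N} (hjk : j ≠ k) (p : ℕ) (n : Fin N → ℤ) :
    ∃ (c : ℕ → ℝ) (d : ℝ), ∀ f, TSol Q f →
      (Δ j)^[p] (f j) (n + Pi.single k 1)
        = (Δ j)^[p] (f j) n
          + ((∑ s ∈ Finset.range p, c s * (Δ j)^[s] (f j) n) + d * f k n) := by
  obtain ⟨c2, hc2⟩ := leibniz j (T k (Q j k)) p n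
  have hred : ∀ s : ℕ, ∃ c3 : ℕ → ℝ, ∀ f, TSol Q f → 1 ≤ s →
      (Δ j)^[s] (f k) n = ∑ t ∈ Finset.range s, c3 t * (Δ j)^[t] (f j) n := by
    intro s
    by_cases h : 1 ≤ s
    · obtain ⟨c3, hc3⟩ := reduce Q (Ne.symm hjk) s h n
      exact ⟨c3, fun f hf _ => hc3 f hf⟩
    · exact ⟨fun _ => 0, fun f hf hs => absurd hs h⟩
  choose c3 hc3 using hred
  refine ⟨fun u => ∑ t ∈ Finset.range p, (if u ≤ t then c2 (t+1) * c3 (t+1) u else 0),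
    c2 0, fun f hf => ?_⟩
  have key : (Δ j)^[p] (f j) (n + Pi.single k 1) - (Δ j)^[p] (f j) n
      = ∑ s ∈ Finset.range (p+1), c2 s * (Δ j)^[s] (f k) n := by
    have h1 : (Δ j)^[p] (f j) (n + Pi.single k 1) - (Δ j)^[p] (f j) n
        = (Δ j)^[p] (Δ k (f j)) n := by
      rw [Δ_iter_comm]; rfl
    rw [h1, hf j k hjk, hc2 (f k)]
  have h2 : ∑ s ∈ Finset.range (p+1), c2 s * (Δ j)^[s] (f k) n
      = (∑ t ∈ Finset.range p,
          c2 (t+1) * ∑ u ∈ Finset.range (t+1), c3 (t+1) u * (Δ j)^[u] (f j) n)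
        + c2 0 * f k n := by
    rw [Finset.sum_range_succ']
    congr 1
    exact Finset.sum_congr rfl fun t _ => by rw [hc3 (t+1) f hf (by omega)]
  have h3 : ∑ u ∈ Finset.range p,
        (∑ t ∈ Finset.range p, (if u ≤ t then c2 (t+1) * c3 (t+1) u else 0))
          * (Δ j)^[u] (f j) n
      = ∑ t ∈ Finset.range p,
          c2 (t+1) * ∑ u ∈ Finset.range (t+1), c3 (t+1) u * (Δ j)^[u] (f j) n := by
    simp only [Finset.sum_mul, ite_mul, zero_mul]
    rw [Finset.sum_comm]
    refine Finset.sum_congr rfl fun t ht => ?_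
    rw [Finset.mul_sum, sum_ite_le (Finset.mem_range.1 ht)]
    exact Finset.sum_congr rfl fun u _ => by ring
  linarith [key, h2, h3]


def gvec (m : Fin N → ℕ) (f : Fin N → (Fin N → ℤ) → ℝ) (n : Fin N → ℤ) :
    (Σ j : Fin N, Fin (m j)) → ℝ :=
  fun r => (Δ r.1)^[(r.2 : ℕ)] (f r.1) n

def uvec (m : Fin N → ℕ) (ξ : (Σ j : Fin N, Fin (m j)) → Fin N → (Fin N → ℤ) → ℝ)
    (i : Fin N) (n : Fin N → ℤ) : (Σ j : Fin N, Fin (m j)) → ℝ :=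
  fun a => (Δ i)^[m i] (ξ a i) n

lemma sum_fin_ite {Mj p : ℕ} (hp : p ≤ Mj) (G : ℕ → ℝ) :
    ∑ s : Fin Mj, (if (s:ℕ) < p then G s else 0) = ∑ s ∈ Finset.range p, G s := by
  rw [Fin.sum_univ_eq_sum_range (fun s => (if s < p then G s else 0)) Mj,
    ← Finset.sum_subset (Finset.range_subset_range.2 hp)
      (fun x _ hx => by rw [if_neg (by simp at hx; omega)])]
  exact Finset.sum_congr rfl fun x hx => by rw [if_pos (Finset.mem_range.1 hx)]

def rowVec (m : Fin N → ℕ) (j k : Fin N) (hk : 0 < m k) (p : ℕ) (c : ℕ → ℝ) (d : ℝ) :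
    (Σ l : Fin N, Fin (m l)) → ℝ :=
  fun r => (if r.1 = j ∧ (r.2 : ℕ) < p then c (r.2 : ℕ) else 0)
    + (if r = ⟨k, ⟨0, hk⟩⟩ then d else 0)

lemma rowVec_dot (m : Fin N → ℕ) {j k : Fin N} (hk : 0 < m k) {p : ℕ} (hp : p ≤ m j)
    (c : ℕ → ℝ) (d : ℝ) (f : Fin N → (Fin N → ℤ) → ℝ) (n : Fin N → ℤ) :
    rowVec m j k hk p c d ⬝ᵥ gvec m f n
      = (∑ s ∈ Finset.range p, c s * (Δ j)^[s] (f j) n) + d * f k n := by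
  unfold dotProduct rowVec
  simp only [add_mul, ite_mul, zero_mul, Finset.sum_add_distrib]
  congr 1
  · rw [← Finset.univ_sigma_univ, Finset.sum_sigma]
    rw [Finset.sum_eq_single j]
    · have heq : ∀ s : Fin (m j),
          (if (⟨j, s⟩ : Σ l, Fin (m l)).1 = j ∧ ((⟨j, s⟩ : Σ l, Fin (m l)).2 : ℕ) < p
            then c ((⟨j, s⟩ : Σ l, Fin (m l)).2 : ℕ) * gvec m f n ⟨j, s⟩ else 0)
          = (if (s : ℕ) < p then c (s : ℕ) * (Δ j)^[(s:ℕ)] (f j) n else 0) := by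
        intro s; simp [gvec]
      rw [Finset.sum_congr rfl fun s _ => heq s]
      exact sum_fin_ite hp (fun s => c s * (Δ j)^[s] (f j) n)
    · intro l _ hl
      exact Finset.sum_eq_zero fun s _ => if_neg (fun h => hl h.1)
    · intro h; exact absurd (Finset.mem_univ j) h
  · rw [Finset.sum_ite_eq' Finset.univ (⟨k, ⟨0, hk⟩⟩ : Σ l, Fin (m l))
      (fun r => d * gvec m f n r)]
    simp [gvec]

lemma rowVec_last (m : Fin N → ℕ) {j k : Fin N} (hk : 0 < m k) {p : ℕ} (hp : p < m j)
    (c : ℕ → ℝ) (d : ℝ) {j' : Fin N} (hj' : j' ≠ k) (h' : 0 < m j') :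
    rowVec m j k hk p c d (lastRow m j' h') = 0 := by
  unfold rowVec lastRow
  rw [if_neg, if_neg, add_zero]
  · exact fun h => hj' (congrArg Sigma.fst h)
  · rintro ⟨h1, h2⟩
    simp only at h1
    subst h1
    simp only at h2
    omega

lemma shiftB (m : Fin N → ℕ) (hm : ∀ j, 0 < m j) (k : Fin N) (n : Fin N → ℤ) :
    ∃ B : Matrix (Σ j : Fin N, Fin (m j)) (Σ j : Fin N, Fin (m j)) ℝ,
      (∀ f, TSol Q f → ∀ r, gvec m f (n + Pi.single k 1) r
          = (B *ᵥ gvec m f n) r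
            + (if r = lastRow m k (hm k) then 1 else 0) * (Δ k)^[m k] (f k) n)
      ∧ (∀ j, j ≠ k → B *ᵥ Pi.single (lastRow m j (hm j)) 1
            = Pi.single (lastRow m j (hm j)) 1) := by
  have hrow : ∀ r : (Σ j : Fin N, Fin (m j)), ∃ w : (Σ j : Fin N, Fin (m j)) → ℝ,
      (∀ f, TSol Q f → gvec m f (n + Pi.single k 1) r
        = w ⬝ᵥ gvec m f n + (if r = lastRow m k (hm k) then 1 else 0) * (Δ k)^[m k] (f k) n)
      ∧ (∀ j', j' ≠ k → w (lastRow m j' (hm j')) = if r = lastRow m j' (hm j') then 1 else 0) := by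
    rintro ⟨j, p⟩
    by_cases hjk : j = k
    · subst hjk
      by_cases hlast : (p : ℕ) + 1 = m j
      · have hr : (⟨j, p⟩ : Σ l, Fin (m l)) = lastRow m j (hm j) := by
          unfold lastRow
          congr 1
          exact Fin.ext (show (p:ℕ) = m j - 1 by omega)
        refine ⟨Pi.single ⟨j, p⟩ 1, fun f hf => ?_, fun j' hj' => ?_⟩
        · rw [single_dotProduct, one_mul, if_pos hr]
          show (Δ j)^[(p:ℕ)] (f j) (n + Pi.single j 1) = _
          rw [iter_pt_shift, hlast]
          simp [gvec]
        · rw [Pi.single_apply]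
          have h1 : lastRow m j' (hm j') ≠ (⟨j, p⟩ : Σ l, Fin (m l)) :=
            fun h => hj' (congrArg Sigma.fst h)
          rw [if_neg h1, if_neg (fun h => hj' (congrArg Sigma.fst h.symm))]
      · have hp1 : (p : ℕ) + 1 < m j := by have := p.isLt; omega
        refine ⟨Pi.single ⟨j, p⟩ 1 + Pi.single ⟨j, ⟨(p:ℕ)+1, hp1⟩⟩ 1,
          fun f hf => ?_, fun j' hj' => ?_⟩
        · rw [add_dotProduct, single_dotProduct, single_dotProduct,
            one_mul, one_mul]
          have hne : (⟨j, p⟩ : Σ l, Fin (m l)) ≠ lastRow m j (hm j) := by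
            intro h
            have hval : (p:ℕ) = m j - 1 :=
              congrArg (fun r : Σ l, Fin (m l) => (r.2 : ℕ)) h
            omega
          rw [if_neg hne, zero_mul, add_zero]
          show (Δ j)^[(p:ℕ)] (f j) (n + Pi.single j 1) = _
          rw [iter_pt_shift]
          simp [gvec]
        · rw [Pi.add_apply, Pi.single_apply, Pi.single_apply]
          have h1 : lastRow m j' (hm j') ≠ (⟨j, p⟩ : Σ l, Fin (m l)) :=
            fun h => hj' (congrArg Sigma.fst h)
          have h2 : lastRow m j' (hm j') ≠ (⟨j, ⟨(p:ℕ)+1, hp1⟩⟩ : Σ l, Fin (m l)) :=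
            fun h => hj' (congrArg Sigma.fst h)
          rw [if_neg h1, if_neg h2, if_neg (fun h => hj' (congrArg Sigma.fst h.symm)),
            add_zero]
    · obtain ⟨c, d, hcd⟩ := shiftRow Q hjk (p : ℕ) n
      refine ⟨Pi.single ⟨j, p⟩ 1 + rowVec m j k (hm k) (p : ℕ) c d,
        fun f hf => ?_, fun j' hj' => ?_⟩
      · rw [add_dotProduct, single_dotProduct, one_mul,
          rowVec_dot m (hm k) (le_of_lt p.isLt) c d f n]
        have hne : (⟨j, p⟩ : Σ l, Fin (m l)) ≠ lastRow m k (hm k) :=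
          fun h => hjk (congrArg Sigma.fst h)
        rw [if_neg hne, zero_mul, add_zero]
        exact hcd f hf
      · rw [Pi.add_apply, Pi.single_apply, rowVec_last m (hm k) p.isLt c d hj' (hm j')]
        by_cases h : (⟨j, p⟩ : Σ l, Fin (m l)) = lastRow m j' (hm j')
        · rw [if_pos h.symm, if_pos h, add_zero]
        · rw [if_neg (fun hh => h hh.symm), if_neg h, add_zero]
  choose w hw1 hw2 using hrow
  refine ⟨Matrix.of w, fun f hf r => hw1 r f hf, fun j hj => ?_⟩
  rw [Matrix.mulVec_single_one]
  funext r
  rw [Matrix.col_apply]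
  show w r (lastRow m j (hm j)) = _
  rw [hw2 r j hj, Pi.single_apply]

lemma shiftU (m : Fin N → ℕ) (hm : ∀ j, 0 < m j) {i k : Fin N} (hik : i ≠ k)
    (n : Fin N → ℤ) :
    ∃ cU : (Σ j : Fin N, Fin (m j)) → ℝ, ∀ f, TSol Q f →
      (Δ i)^[m i] (f i) (n + Pi.single k 1)
        = (Δ i)^[m i] (f i) n + cU ⬝ᵥ gvec m f n := by
  obtain ⟨c, d, hcd⟩ := shiftRow Q hik (m i) n
  exact ⟨rowVec m i k (hm k) (m i) c d, fun f hf => by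
    rw [hcd f hf, rowVec_dot m (hm k) (le_refl (m i)) c d f n]⟩


end Aux

lemma det_updateRow_div {ι : Type*} [Fintype ι] [DecidableEq ι]
    (W : Matrix ι ι ℝ) (hW : W.det ≠ 0) (r : ι) (w : ι → ℝ) :
    (W.updateRow r w).det / W.det = w ⬝ᵥ (W⁻¹ *ᵥ Pi.single r 1) := by
  have h1 : (W.updateRow r w).det = cramer Wᵀ w r := (cramer_transpose_apply W w r).symm
  rw [h1, cramer_eq_adjugate_mulVec, ← Matrix.adjugate_transpose]
  rw [Matrix.inv_def, Ring.inverse_eq_inv']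
  rw [Matrix.smul_mulVec, dotProduct_smul]
  rw [Matrix.mulVec_single]
  have h2 : ((adjugate W)ᵀ *ᵥ w) r = w ⬝ᵥ fun i => W.adjugate i r * 1 := by
    simp [Matrix.mulVec, Matrix.vecMul, dotProduct, Matrix.transpose_apply,
      mul_comm]
  rw [h2]
  rw [div_eq_inv_mul]
  rfl


lemma Xdet_eq {N : ℕ} (m : Fin N → ℕ)
    (ξ : (Σ j : Fin N, Fin (m j)) → Fin N → (Fin N → ℤ) → ℝ)
    (χ : Fin N → (Fin N → ℤ) → ℝ) (i : Fin N) (n : Fin N → ℤ)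
    (hW : (Wmat m ξ n).det ≠ 0) :
    (Xmat m ξ χ i n).det
      = (Wmat m ξ n).det
        * ((Δ i)^[m i] (χ i) n - (uvec m ξ i n ᵥ* (Wmat m ξ n)⁻¹) ⬝ᵥ gvec m χ n) := by
  classical
  set W := Wmat m ξ n with hWdef
  haveI : Invertible W := W.invertibleOfIsUnitDet (isUnit_iff_ne_zero.2 hW)
  let e : ((Σ j : Fin N, Fin (m j)) ⊕ PUnit.{1}) ≃ Option (Σ j : Fin N, Fin (m j)) :=
    (Equiv.optionEquivSumPUnit _).symm
  have hsub : (Xmat m ξ χ i n).submatrix e e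
      = Matrix.fromBlocks W
          (Matrix.of fun r (_ : PUnit.{1}) => gvec m χ n r)
          (Matrix.of fun (_ : PUnit.{1}) a => uvec m ξ i n a)
          (Matrix.of fun (_ : PUnit.{1}) (_ : PUnit.{1}) => (Δ i)^[m i] (χ i) n) := by
    ext r a
    rcases r with r | r <;> rcases a with a | a <;> rfl
  have h1 : (Xmat m ξ χ i n).det = ((Xmat m ξ χ i n).submatrix e e).det :=
    (Matrix.det_submatrix_equiv_self e _).symm
  rw [h1, hsub, Matrix.det_fromBlocks₁₁]
  congr 1
  rw [Matrix.det_unique]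
  have hinv : (⅟W : Matrix _ _ ℝ) = W⁻¹ := invOf_eq_nonsing_inv W
  rw [hinv]
  show (Δ i)^[m i] (χ i) n
      - (Matrix.of (fun (_ : PUnit.{1}) a => uvec m ξ i n a) * W⁻¹
          * Matrix.of fun r (_ : PUnit.{1}) => gvec m χ n r) default default = _
  congr 1


/-- Iterated Levy transformation (Theorem 1): with `det 𝒲` nowhere vanishing, the data
`X_i[M] = det 𝕏_i / det 𝒲`, `H_i[M] = −det ℍ_i / det 𝒲` and
`Q_{ij}[M] = −det 𝒲_{ij} / det 𝒲` satisfy the quadrilateral-lattice linear systems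
`Δ_k X_i[M] = (T_k Q_{ik}[M])·X_k[M]` and `Δ_k H_i[M] = Q_{ki}[M]·(T_k H_k[M])`
for all `i ≠ k`. -/
theorem statement_19 (N : ℕ) (hN : 2 ≤ N)
    (Q : Fin N → Fin N → (Fin N → ℤ) → ℝ)
    (m : Fin N → ℕ) (hm : ∀ j, 0 < m j)
    (ξ : (Σ j : Fin N, Fin (m j)) → Fin N → (Fin N → ℤ) → ℝ)
    (hξ : ∀ a, ∀ j k : Fin N, j ≠ k → Δ k (ξ a j) = T k (Q j k) * ξ a k)
    (χ : Fin N → (Fin N → ℤ) → ℝ)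
    (hχ : ∀ j k : Fin N, j ≠ k → Δ k (χ j) = T k (Q j k) * χ k)
    (H : Fin N → (Fin N → ℤ) → ℝ)
    (hH : ∀ j k : Fin N, j ≠ k → Δ j (H k) = Q j k * T j (H j))
    (Ω : (Σ j : Fin N, Fin (m j)) → (Fin N → ℤ) → ℝ)
    (hΩ : ∀ a, ∀ l : Fin N, Δ l (Ω a) = ξ a l * T l (H l))
    (hdet : ∀ n : Fin N → ℤ, (Wmat m ξ n).det ≠ 0)
    (XM HM : Fin N → (Fin N → ℤ) → ℝ)
    (QM : Fin N → Fin N → (Fin N → ℤ) → ℝ)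
    (hXM : ∀ (i : Fin N) (n : Fin N → ℤ),
      XM i n = (Xmat m ξ χ i n).det / (Wmat m ξ n).det)
    (hHM : ∀ (i : Fin N) (n : Fin N → ℤ),
      HM i n = -((Wmat m ξ n).updateRow (lastRow m i (hm i)) (fun a => Ω a n)).det
                  / (Wmat m ξ n).det)
    (hQM : ∀ i j : Fin N, i ≠ j → ∀ n : Fin N → ℤ,
      QM i j n = -((Wmat m ξ n).updateRow (lastRow m j (hm j))
                      (fun a => (Δ i)^[m i] (ξ a i) n)).det
                  / (Wmat m ξ n).det) :
    ∀ i k : Fin N, i ≠ k →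
      Δ k (XM i) = T k (QM i k) * XM k ∧
      Δ k (HM i) = QM k i * T k (HM k) := by
  classical
  have hdetU : ∀ n : Fin N → ℤ, IsUnit (Wmat m ξ n).det :=
    fun n => isUnit_iff_ne_zero.2 (hdet n)
  intro i k hik
  have hTξ : ∀ a, TSol Q (ξ a) := fun a => hξ a
  have hTχ : TSol Q χ := hχ
  constructor
  · -- the X equation
    funext n
    show XM i (n + Pi.single k 1) - XM i n
        = QM i k (n + Pi.single k 1) * XM k n
    have hXval : ∀ (l : Fin N) (nn : Fin N → ℤ), XM l nn
        = (Δ l)^[m l] (χ l) nn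
          - (uvec m ξ l nn ᵥ* (Wmat m ξ nn)⁻¹) ⬝ᵥ gvec m χ nn := by
      intro l nn
      rw [hXM l nn, Xdet_eq m ξ χ l nn (hdet nn),
        mul_div_cancel_left₀ _ (hdet nn)]
    have hxzero : ∀ (l : Fin N) (nn : Fin N → ℤ) (a : Σ j : Fin N, Fin (m j)),
        (Δ l)^[m l] (ξ a l) nn
          - (uvec m ξ l nn ᵥ* (Wmat m ξ nn)⁻¹) ⬝ᵥ gvec m (ξ a) nn = 0 := by
      intro l nn a
      have hcol : gvec m (ξ a) nn = Wmat m ξ nn *ᵥ Pi.single a 1 := by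
        rw [Matrix.mulVec_single_one]
        funext r
        rw [Matrix.col_apply]
        rfl
      rw [hcol, Matrix.dotProduct_mulVec, Matrix.vecMul_vecMul,
        Matrix.nonsing_inv_mul _ (hdetU nn), Matrix.vecMul_one,
        dotProduct_single, mul_one]
      simp [uvec]
    obtain ⟨B, hB, hBsupp⟩ := shiftB Q m hm k n
    obtain ⟨cU, hcU⟩ := shiftU Q m hm hik n
    set γ : ℝ := -(uvec m ξ i (n + Pi.single k 1)
        ⬝ᵥ ((Wmat m ξ (n + Pi.single k 1))⁻¹
            *ᵥ Pi.single (lastRow m k (hm k)) 1)) with hγdef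
    have hQMik : QM i k (n + Pi.single k 1) = γ := by
      rw [hγdef, hQM i k hik (n + Pi.single k 1), neg_div,
        det_updateRow_div _ (hdet _) _ _]
      rfl
    have hlast : (uvec m ξ i (n + Pi.single k 1)
        ᵥ* (Wmat m ξ (n + Pi.single k 1))⁻¹) (lastRow m k (hm k)) = -γ := by
      rw [hγdef, neg_neg, Matrix.dotProduct_mulVec, dotProduct_single,
        mul_one]
    have hgshift : ∀ f, TSol Q f →
        gvec m f (n + Pi.single k 1)
          = B *ᵥ gvec m f n
            + ((Δ k)^[m k] (f k) n)
              • (Pi.single (lastRow m k (hm k)) 1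
                  : (Σ j : Fin N, Fin (m j)) → ℝ) := by
      intro f hf
      funext r
      rw [Pi.add_apply, Pi.smul_apply, Pi.single_apply, smul_eq_mul, hB f hf r]
      by_cases h : r = lastRow m k (hm k)
      · rw [if_pos h]; ring
      · rw [if_neg h]; ring
    set z : (Σ j : Fin N, Fin (m j)) → ℝ :=
      cU + (uvec m ξ i n ᵥ* (Wmat m ξ n)⁻¹)
        + γ • (uvec m ξ k n ᵥ* (Wmat m ξ n)⁻¹)
        - ((uvec m ξ i (n + Pi.single k 1)
            ᵥ* (Wmat m ξ (n + Pi.single k 1))⁻¹) ᵥ* B) with hzdef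
    have claimC : ∀ f, TSol Q f →
        ((Δ i)^[m i] (f i) (n + Pi.single k 1)
            - (uvec m ξ i (n + Pi.single k 1)
                ᵥ* (Wmat m ξ (n + Pi.single k 1))⁻¹)
              ⬝ᵥ gvec m f (n + Pi.single k 1))
          - ((Δ i)^[m i] (f i) n
              - (uvec m ξ i n ᵥ* (Wmat m ξ n)⁻¹) ⬝ᵥ gvec m f n)
          - γ * ((Δ k)^[m k] (f k) n
              - (uvec m ξ k n ᵥ* (Wmat m ξ n)⁻¹) ⬝ᵥ gvec m f n)
        = z ⬝ᵥ gvec m f n := by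
      intro f hf
      rw [hcU f hf, hgshift f hf, dotProduct_add, dotProduct_smul,
        smul_eq_mul, dotProduct_single, mul_one, hlast,
        Matrix.dotProduct_mulVec _ B, hzdef]
      simp only [sub_dotProduct, add_dotProduct,
        smul_dotProduct, smul_eq_mul]
      ring
    have hz0 : z = 0 := by
      have hzW : z ᵥ* Wmat m ξ n = 0 := by
        funext a
        have h0 : z ⬝ᵥ gvec m (ξ a) n = 0 := by
          have hc := claimC (ξ a) (hTξ a)
          rw [hxzero i (n + Pi.single k 1) a, hxzero i n a, hxzero k n a] at hc
          simpa using hc.symm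
        have h7 : (z ᵥ* Wmat m ξ n) a = z ⬝ᵥ gvec m (ξ a) n := rfl
        rw [h7, h0]
        rfl
      calc z = z ᵥ* 1 := (Matrix.vecMul_one z).symm
        _ = z ᵥ* (Wmat m ξ n * (Wmat m ξ n)⁻¹) := by
            rw [Matrix.mul_nonsing_inv _ (hdetU n)]
        _ = (z ᵥ* Wmat m ξ n) ᵥ* (Wmat m ξ n)⁻¹ :=
            (Matrix.vecMul_vecMul z _ _).symm
        _ = 0 := by rw [hzW, Matrix.zero_vecMul]
    have hfin := claimC χ hTχ
    rw [hz0, zero_dotProduct] at hfin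
    rw [hXval i (n + Pi.single k 1), hXval i n, hXval k n, hQMik]
    linarith [hfin]
  · -- the H equation
    funext n
    show HM i (n + Pi.single k 1) - HM i n
        = QM k i n * HM k (n + Pi.single k 1)
    obtain ⟨B, hB, hBsupp⟩ := shiftB Q m hm k n
    set ei : (Σ j : Fin N, Fin (m j)) → ℝ :=
      Pi.single (lastRow m i (hm i)) 1 with heidef
    set ek : (Σ j : Fin N, Fin (m j)) → ℝ :=
      Pi.single (lastRow m k (hm k)) 1 with hekdef
    have hyW : ∀ l : Fin N,
        Wmat m ξ n *ᵥ ((Wmat m ξ n)⁻¹ *ᵥ Pi.single (lastRow m l (hm l)) 1)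
          = Pi.single (lastRow m l (hm l)) 1 := by
      intro l
      rw [Matrix.mulVec_mulVec, Matrix.mul_nonsing_inv _ (hdetU n),
        Matrix.one_mulVec]
    have hHMval : ∀ (l : Fin N) (nn : Fin N → ℤ), HM l nn
        = -((fun a => Ω a nn)
            ⬝ᵥ ((Wmat m ξ nn)⁻¹ *ᵥ Pi.single (lastRow m l (hm l)) 1)) := by
      intro l nn
      rw [hHM l nn, neg_div, det_updateRow_div _ (hdet nn)]
    have hQMval : QM k i n
        = -(uvec m ξ k n
            ⬝ᵥ ((Wmat m ξ n)⁻¹ *ᵥ ei)) := by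
      rw [hQM k i (Ne.symm hik) n, neg_div, det_updateRow_div _ (hdet n)]
      rfl
    have hyWei : Wmat m ξ n *ᵥ ((Wmat m ξ n)⁻¹ *ᵥ ei) = ei := by
      rw [heidef]; exact hyW i
    have hBei : B *ᵥ ei = ei := by
      rw [heidef]; exact hBsupp i hik
    have houter : ∀ (e u y : (Σ j : Fin N, Fin (m j)) → ℝ),
        (Matrix.of fun r a => e r * u a) *ᵥ y = (u ⬝ᵥ y) • e := by
      intro e u y
      funext r
      show (∑ a, (e r * u a) * y a) = (∑ a, u a * y a) * e r
      rw [Finset.sum_congr rfl (fun a _ => show (e r * u a) * y a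
        = (u a * y a) * e r by ring), ← Finset.sum_mul]
    have hWeq : Wmat m ξ (n + Pi.single k 1)
        = B * Wmat m ξ n
          + Matrix.of (fun r a =>
              (ek
                : (Σ j : Fin N, Fin (m j)) → ℝ) r * uvec m ξ k n a) := by
      ext r a
      have h1 := hB (ξ a) (hTξ a) r
      show gvec m (ξ a) (n + Pi.single k 1) r = _
      rw [h1, Matrix.add_apply, Matrix.of_apply, hekdef, Pi.single_apply]
      rfl
    have hclaim : Wmat m ξ (n + Pi.single k 1)
          *ᵥ ((Wmat m ξ n)⁻¹ *ᵥ ei)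
        = ei
          + (uvec m ξ k n
              ⬝ᵥ ((Wmat m ξ n)⁻¹ *ᵥ ei))
            • ek := by
      rw [hWeq, Matrix.add_mulVec, houter, ← Matrix.mulVec_mulVec, hyWei,
        hBei]
    have hyrel : (Wmat m ξ n)⁻¹ *ᵥ ei
        = (Wmat m ξ (n + Pi.single k 1))⁻¹
            *ᵥ ei
          + (uvec m ξ k n
              ⬝ᵥ ((Wmat m ξ n)⁻¹ *ᵥ ei))
            • ((Wmat m ξ (n + Pi.single k 1))⁻¹
                *ᵥ ek) := by
      have h2 := congrArg
        (fun v => (Wmat m ξ (n + Pi.single k 1))⁻¹ *ᵥ v) hclaim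
      simp only [Matrix.mulVec_mulVec, Matrix.mulVec_add, Matrix.mulVec_smul]
        at h2
      rw [← Matrix.mul_assoc,
        Matrix.nonsing_inv_mul _ (hdetU (n + Pi.single k 1)),
        Matrix.one_mul] at h2
      exact h2
    have hΩ' : (fun a : Σ j : Fin N, Fin (m j) => Ω a (n + Pi.single k 1))
        = (fun a : Σ j : Fin N, Fin (m j) => Ω a n)
          + (H k (n + Pi.single k 1)) • (fun a => ξ a k n) := by
      funext a
      have h3 := congrFun (hΩ a k) n
      show Ω a (n + Pi.single k 1)
          = Ω a n + H k (n + Pi.single k 1) * ξ a k n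
      have h4 : Ω a (n + Pi.single k 1) - Ω a n
          = ξ a k n * H k (n + Pi.single k 1) := h3
      linarith
    have hvk : (fun a : Σ j : Fin N, Fin (m j) => ξ a k n)
        ⬝ᵥ ((Wmat m ξ n)⁻¹ *ᵥ ei) = 0 := by
      have h6 : ei (⟨k, ⟨0, hm k⟩⟩ : Σ j : Fin N, Fin (m j)) = 0 := by
        rw [heidef, Pi.single_apply, if_neg]
        exact fun h => hik (congrArg Sigma.fst h).symm
      calc (fun a : Σ j : Fin N, Fin (m j) => ξ a k n)
            ⬝ᵥ ((Wmat m ξ n)⁻¹ *ᵥ ei)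
          = (Wmat m ξ n *ᵥ ((Wmat m ξ n)⁻¹
              *ᵥ ei)) ⟨k, ⟨0, hm k⟩⟩ := rfl
        _ = 0 := by rw [hyWei]; exact h6
    have e1 : (fun a : Σ j : Fin N, Fin (m j) => Ω a n)
          ⬝ᵥ ((Wmat m ξ n)⁻¹ *ᵥ ei)
        = (fun a : Σ j : Fin N, Fin (m j) => Ω a n)
            ⬝ᵥ ((Wmat m ξ (n + Pi.single k 1))⁻¹
                *ᵥ ei)
          + (uvec m ξ k n
              ⬝ᵥ ((Wmat m ξ n)⁻¹ *ᵥ ei))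
            * ((fun a : Σ j : Fin N, Fin (m j) => Ω a n)
                ⬝ᵥ ((Wmat m ξ (n + Pi.single k 1))⁻¹
                    *ᵥ ek)) := by
      rw [hyrel, dotProduct_add, dotProduct_smul, smul_eq_mul]
      rw [← hyrel]
    have e2 : (fun a : Σ j : Fin N, Fin (m j) => ξ a k n)
          ⬝ᵥ ((Wmat m ξ (n + Pi.single k 1))⁻¹
              *ᵥ ei)
        + (uvec m ξ k n
            ⬝ᵥ ((Wmat m ξ n)⁻¹ *ᵥ ei))
          * ((fun a : Σ j : Fin N, Fin (m j) => ξ a k n)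
              ⬝ᵥ ((Wmat m ξ (n + Pi.single k 1))⁻¹
                  *ᵥ ek)) = 0 := by
      have h8 := hvk
      rw [hyrel, dotProduct_add, dotProduct_smul, smul_eq_mul]
        at h8
      exact h8
    rw [hHMval i (n + Pi.single k 1), hHMval i n,
      hHMval k (n + Pi.single k 1), hQMval, hΩ']
    simp only [add_dotProduct, smul_dotProduct, smul_eq_mul]
    linear_combination e1 - (H k (n + Pi.single k 1)) * e2
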